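/- Let n be a finite index type, let T and T′ be n×n diagonal complex matrices, let Q be an invertible n×n complex matrix with Q·T = T′·Q, and let M, M′ be n×n complex matrices with Q·M = M′·Q. Then for every c ∈ ℂ, the sum of the diagonal entries M_{x,x} over all indices x with T_{x,x} = c equals the sum of the diagonal entries M′_{a,a} over all indices a with T′_{a,a} = c. -/

import Mathlib

open Matrix

theorem stmt_8 {n : Type*} [Fintype n] [DecidableEq n]
    (T T' Q M M' : Matrix n n ℂ)
    (hT : T.IsDiag) (hT' : T'.IsDiag)
    (hQ : IsUnit Q.det) (hQT : Q * T = T' * Q)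
    (hQM : Q * M = M' * Q) (c : ℂ) :
    ∑ x ∈ Finset.univ.filter (fun x : n => T x x = c), M x x =
      ∑ a ∈ Finset.univ.filter (fun a : n => T' a a = c), M' a a := by
  set E : Matrix n n ℂ := Matrix.diagonal (fun a => if T a a = c then 1 else 0) with hE
  set E' : Matrix n n ℂ := Matrix.diagonal (fun a => if T' a a = c then 1 else 0) with hE'
  -- key intertwining: Q * E = E' * Q
  have key : ∀ x a, Q x a ≠ 0 → T a a = T' x x := by
    intro x a hxa
    have h1 : (Q * T) x a = Q x a * T a a := by
      rw [Matrix.mul_apply]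
      refine Finset.sum_eq_single a (fun j _ hj => ?_) (by simp)
      rw [hT hj, mul_zero]
    have h2 : (T' * Q) x a = T' x x * Q x a := by
      rw [Matrix.mul_apply]
      refine Finset.sum_eq_single x (fun j _ hj => ?_) (by simp)
      rw [hT' hj.symm, zero_mul]
    have h3 : Q x a * T a a = Q x a * T' x x := by
      rw [← h1, hQT, h2, mul_comm]
    exact mul_left_cancel₀ hxa h3
  have hcomm : Q * E = E' * Q := by
    ext x a
    rw [Matrix.mul_apply, Matrix.mul_apply]
    rw [Finset.sum_eq_single a (fun j _ hj => by simp [hE, Matrix.diagonal, hj]) (by simp),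
        Finset.sum_eq_single x (fun j _ hj => by simp [hE', Matrix.diagonal, (Ne.symm hj)]) (by simp)]
    simp only [hE, hE', Matrix.diagonal_apply_eq]
    by_cases hxa : Q x a = 0
    · simp [hxa]
    · rw [key x a hxa, mul_comm]
  have hQQ : Q * Q⁻¹ = 1 := Matrix.mul_nonsing_inv Q hQ
  have hQQ' : Q⁻¹ * Q = 1 := Matrix.nonsing_inv_mul Q hQ
  have htr : Matrix.trace (E * M) = Matrix.trace (E' * M') := by
    have h1 : Q * (E * M) = E' * M' * Q := by
      rw [← Matrix.mul_assoc, hcomm, Matrix.mul_assoc, hQM, ← Matrix.mul_assoc]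
    calc Matrix.trace (E * M) = Matrix.trace (Q⁻¹ * (Q * (E * M))) := by
          rw [← Matrix.mul_assoc, hQQ', one_mul]
    _ = Matrix.trace (Q⁻¹ * (E' * M' * Q)) := by rw [h1]
    _ = Matrix.trace (E' * M' * Q * Q⁻¹) := by rw [Matrix.trace_mul_comm]
    _ = Matrix.trace (E' * M') := by rw [Matrix.mul_assoc, hQQ, Matrix.mul_one]
  have hl : ∀ (A : Matrix n n ℂ) (f : n → Prop) [DecidablePred f],
      Matrix.trace (Matrix.diagonal (fun a => if f a then (1:ℂ) else 0) * A) =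
        ∑ x ∈ Finset.univ.filter f, A x x := by
    intro A f _
    rw [Matrix.trace]
    simp only [Matrix.diag_apply, Matrix.diagonal_mul, ite_mul, one_mul, zero_mul]
    rw [Finset.sum_ite, Finset.sum_const_zero, add_zero]
  rw [← hl M (fun x => T x x = c), ← hl M' (fun a => T' a a = c)]
  exact htr
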